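/- Let D be a domain and x, y nonzero elements with xD : yD = xD. Then (x², y) : (x, y) = (x, y). -/

import Mathlib

theorem colon_sq (R : Type*) [CommRing R] [IsDomain R]
    (x y : R) (hx : x ≠ 0) (hy : y ≠ 0)
    (hv : (Ideal.span {x}).colon (Ideal.span {y}) = Ideal.span {x}) :
    (Ideal.span {x ^ 2, y}).colon (Ideal.span {x, y}) = Ideal.span {x, y} := by
  apply le_antisymm
  · intro a ha
    rw [Submodule.mem_colon] at ha
    have hax : a * x ∈ Ideal.span {x ^ 2, y} := by
      have := ha x (Ideal.subset_span (by simp))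
      simpa [smul_eq_mul] using this
    rw [show ({x ^ 2, y} : Set R) = {x ^ 2, y} from rfl, Ideal.mem_span_pair] at hax
    obtain ⟨b, c, hbc⟩ := hax
    have hcy : c * y ∈ Ideal.span {x} := by
      rw [Ideal.mem_span_singleton]
      exact ⟨a - b * x, by linear_combination hbc⟩
    have hc : c ∈ Ideal.span {x} := by
      rw [← hv, Submodule.mem_colon]
      intro p hp
      rw [SetLike.mem_coe, Ideal.mem_span_singleton] at hp
      obtain ⟨q, rfl⟩ := hp
      rw [Ideal.mem_span_singleton] at hcy ⊢
      obtain ⟨r, hr⟩ := hcy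
      exact ⟨r * q, by rw [smul_eq_mul]; linear_combination q * hr⟩
    rw [Ideal.mem_span_singleton] at hc
    obtain ⟨d, rfl⟩ := hc
    have key : x * (a - (b * x + d * y)) = 0 := by linear_combination -hbc
    have : a - (b * x + d * y) = 0 := by
      rcases mul_eq_zero.mp key with h | h
      · exact absurd h hx
      · exact h
    rw [Ideal.mem_span_pair]
    exact ⟨b, d, by linear_combination -this⟩
  · intro a ha
    rw [Ideal.mem_span_pair] at ha
    obtain ⟨s, t, rfl⟩ := ha
    rw [Submodule.mem_colon]
    intro p hp
    rw [SetLike.mem_coe, Ideal.mem_span_pair] at hp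
    obtain ⟨u, v, rfl⟩ := hp
    rw [Ideal.mem_span_pair]
    exact ⟨s * u, s * v * x + t * u * x + t * v * y, by rw [smul_eq_mul]; ring⟩
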